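/- arXiv:1201.6471 — 3 statements merged into one kernel-verified Lean document; each statement's English description precedes it below -/
import Mathlib

section
/- Let z ∈ ℝ and let g_n : (−∞, 0] → ℝ be a twice differentiable function with −g_n''(s) − s·g_n(s) = z·g_n(s) for s ≤ 0, g_n(0) = 0, ∫_{−∞}^0 g_n(s)² ds = 1, and such that g_n, g_n' decay exponentially at −∞. Let f : (−∞,0] → ℝ decay exponentially, let c, α ∈ ℝ, and suppose g : (−∞,0] → ℝ is twice differentiable with exponential decay of g and g' at −∞, satisfies (−∂_s² − s − z)g = f + α·g_n on (−∞,0), and g(0) = c. Then α = c·g_n'(0) − ∫_{−∞}^0 f(s)·g_n(s) ds. -/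
open MeasureTheory Set Filter Real

lemma expint0 {a : ℝ} (ha : 0 < a) :
    IntegrableOn (fun s => Real.exp (a * s)) (Set.Iic (0:ℝ)) := by
  have h1 : Integrable ((Set.Iic (0:ℝ)).indicator Real.exp) :=
    (integrableOn_exp_Iic 0).integrable_indicator measurableSet_Iic
  have h2 := (integrable_comp_mul_left_iff ((Set.Iic (0:ℝ)).indicator Real.exp)
    (ne_of_gt ha)).2 h1
  rw [← integrable_indicator_iff measurableSet_Iic]
  have heq : (Set.Iic (0:ℝ)).indicator (fun s => Real.exp (a * s)) =
      fun x => (Set.Iic (0:ℝ)).indicator Real.exp (a * x) := by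
    funext x
    simp only [Set.indicator_apply, Set.mem_Iic]
    rcases le_or_gt x 0 with hx | hx
    · rw [if_pos hx, if_pos (mul_nonpos_of_nonneg_of_nonpos ha.le hx)]
    · rw [if_neg (not_le.2 hx), if_neg (not_le.2 (mul_pos ha hx))]
  rw [heq]
  exact h2

theorem stmt4 (z : ℝ) (gn gn' gn'' f g g' g'' : ℝ → ℝ) (c α : ℝ)
    (hgn1 : ∀ s ∈ Set.Iic (0:ℝ), HasDerivWithinAt gn (gn' s) (Set.Iic 0) s)
    (hgn2 : ∀ s ∈ Set.Iic (0:ℝ), HasDerivWithinAt gn' (gn'' s) (Set.Iic 0) s)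
    (hgneq : ∀ s ≤ (0:ℝ), -gn'' s - s * gn s = z * gn s)
    (hgn0 : gn 0 = 0)
    (hnorm : ∫ s in Set.Iic (0:ℝ), (gn s) ^ 2 = 1)
    (hgndec : ∃ C a : ℝ, 0 < a ∧ ∀ s ≤ (0:ℝ),
      |gn s| ≤ C * Real.exp (a * s) ∧ |gn' s| ≤ C * Real.exp (a * s))
    (hfcont : ContinuousOn f (Set.Iic 0))
    (hfdec : ∃ C a : ℝ, 0 < a ∧ ∀ s ≤ (0:ℝ), |f s| ≤ C * Real.exp (a * s))
    (hg1 : ∀ s ∈ Set.Iic (0:ℝ), HasDerivWithinAt g (g' s) (Set.Iic 0) s)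
    (hg2 : ∀ s ∈ Set.Iic (0:ℝ), HasDerivWithinAt g' (g'' s) (Set.Iic 0) s)
    (hgeq : ∀ s < (0:ℝ), -g'' s - s * g s - z * g s = f s + α * gn s)
    (hgdec : ∃ C a : ℝ, 0 < a ∧ ∀ s ≤ (0:ℝ),
      |g s| ≤ C * Real.exp (a * s) ∧ |g' s| ≤ C * Real.exp (a * s))
    (hgc : g 0 = c) :
    α = c * gn' 0 - ∫ s in Set.Iic (0:ℝ), f s * gn s := by
  obtain ⟨C1, a1, ha1, hb1⟩ := hgndec
  obtain ⟨C2, a2, ha2, hb2⟩ := hfdec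
  obtain ⟨C3, a3, ha3, hb3⟩ := hgdec
  have hgncont : ContinuousOn gn (Set.Iic 0) := fun s hs => (hgn1 s hs).continuousWithinAt
  have hgn'cont : ContinuousOn gn' (Set.Iic 0) := fun s hs => (hgn2 s hs).continuousWithinAt
  have hgcont : ContinuousOn g (Set.Iic 0) := fun s hs => (hg1 s hs).continuousWithinAt
  have hg'cont : ContinuousOn g' (Set.Iic 0) := fun s hs => (hg2 s hs).continuousWithinAt
  -- integrability of f*gn
  have hint_fgn : IntegrableOn (fun s => f s * gn s) (Set.Iic 0) := by
    refine Integrable.mono' ((expint0 (by linarith : (0:ℝ) < a2 + a1)).const_mul (C2 * C1))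
      ((hfcont.mul hgncont).aestronglyMeasurable measurableSet_Iic) ?_
    refine (ae_restrict_iff' measurableSet_Iic).2 (Filter.Eventually.of_forall fun s hs => ?_)
    have h1 := (hb2 s hs)
    have h2 := (hb1 s hs).1
    calc ‖f s * gn s‖ = |f s| * |gn s| := by rw [Real.norm_eq_abs, abs_mul]
      _ ≤ (C2 * Real.exp (a2 * s)) * (C1 * Real.exp (a1 * s)) :=
          mul_le_mul h1 h2 (abs_nonneg _) ((abs_nonneg _).trans h1)
      _ = C2 * C1 * Real.exp ((a2 + a1) * s) := by
          rw [add_mul, Real.exp_add]; ring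
  -- integrability of gn^2
  have hint_gn2 : IntegrableOn (fun s => gn s ^ 2) (Set.Iic 0) := by
    refine Integrable.mono' ((expint0 (by linarith : (0:ℝ) < a1 + a1)).const_mul (C1 * C1))
      ((hgncont.pow 2).aestronglyMeasurable measurableSet_Iic) ?_
    refine (ae_restrict_iff' measurableSet_Iic).2 (Filter.Eventually.of_forall fun s hs => ?_)
    have h2 := (hb1 s hs).1
    calc ‖gn s ^ 2‖ = |gn s| * |gn s| := by
          rw [Real.norm_eq_abs, abs_pow, sq]
      _ ≤ (C1 * Real.exp (a1 * s)) * (C1 * Real.exp (a1 * s)) :=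
          mul_le_mul h2 h2 (abs_nonneg _) ((abs_nonneg _).trans h2)
      _ = C1 * C1 * Real.exp ((a1 + a1) * s) := by
          rw [add_mul, Real.exp_add]; ring
  set W : ℝ → ℝ := fun s => g' s * gn s - g s * gn' s with hW
  set W' : ℝ → ℝ := fun s => g'' s * gn s - g s * gn'' s with hW'
  -- derivative of W on Iio 0
  have hWderiv : ∀ x ∈ Set.Iio (0:ℝ), HasDerivAt W (W' x) x := by
    intro x hx
    have hmem : Set.Iic (0:ℝ) ∈ nhds x := Iic_mem_nhds hx
    have h1 : HasDerivAt g (g' x) x := (hg1 x hx.out.le).hasDerivAt hmem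
    have h2 : HasDerivAt g' (g'' x) x := (hg2 x hx.out.le).hasDerivAt hmem
    have h3 : HasDerivAt gn (gn' x) x := (hgn1 x hx.out.le).hasDerivAt hmem
    have h4 : HasDerivAt gn' (gn'' x) x := (hgn2 x hx.out.le).hasDerivAt hmem
    have : HasDerivAt (fun y => g' y * gn y - g y * gn' y)
        (g'' x * gn x + g' x * gn' x - (g' x * gn' x + g x * gn'' x)) x :=
      (h2.mul h3).sub (h1.mul h4)
    convert this using 1
    simp only [hW']
    ring
  -- W' equals -(f*gn + α*gn^2) on Iio 0
  have hW'eq : ∀ s < (0:ℝ), W' s = -(f s * gn s + α * gn s ^ 2) := by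
    intro s hs
    have e1 : gn'' s = -(s * gn s) - z * gn s := by have := hgneq s hs.le; linarith
    have e2 : g'' s = -(s * g s) - z * g s - (f s + α * gn s) := by
      have := hgeq s hs; linarith
    simp only [hW', e1, e2]
    ring
  -- integrability of W'
  have hae : W' =ᵐ[volume.restrict (Set.Iic 0)]
      (fun s => -(f s * gn s + α * gn s ^ 2)) := by
    have h0 : ∀ᵐ (s : ℝ), s ≠ 0 := by
      rw [MeasureTheory.ae_iff]
      simp only [not_not, Set.setOf_eq_eq_singleton]
      exact measure_singleton 0
    filter_upwards [ae_restrict_of_ae h0, ae_restrict_mem measurableSet_Iic] with s hs hs'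
    exact hW'eq s (lt_of_le_of_ne hs' hs)
  have hint_rhs : IntegrableOn (fun s => -(f s * gn s + α * gn s ^ 2)) (Set.Iic 0) :=
    (hint_fgn.add (hint_gn2.const_mul α)).neg
  have hW'int : IntegrableOn W' (Set.Iic 0) := hint_rhs.congr hae.symm
  -- W tends to 0 at -∞
  have hWtend : Filter.Tendsto W Filter.atBot (nhds 0) := by
    rw [tendsto_zero_iff_abs_tendsto_zero]
    have hbd : Filter.Tendsto (fun s => 2 * (C3 * C1) * Real.exp ((a3 + a1) * s))
        Filter.atBot (nhds 0) := by
      have h1 : Filter.Tendsto (fun s : ℝ => (a3 + a1) * s) Filter.atBot Filter.atBot :=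
        Filter.tendsto_id.const_mul_atBot (by linarith)
      have := Real.tendsto_exp_atBot.comp h1
      have h2 := this.const_mul (2 * (C3 * C1))
      simpa using h2
    refine squeeze_zero' (Filter.Eventually.of_forall fun s => abs_nonneg _) ?_ hbd
    filter_upwards [Filter.Iic_mem_atBot (0:ℝ)] with s hs
    have h1 := (hb3 s hs).2
    have h2 := (hb1 s hs).1
    have h3 := (hb3 s hs).1
    have h4 := (hb1 s hs).2
    have e1 : |g' s * gn s| ≤ (C3 * C1) * Real.exp ((a3 + a1) * s) := by
      rw [abs_mul]
      calc |g' s| * |gn s| ≤ (C3 * Real.exp (a3 * s)) * (C1 * Real.exp (a1 * s)) :=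
            mul_le_mul h1 h2 (abs_nonneg _) ((abs_nonneg _).trans h1)
        _ = (C3 * C1) * Real.exp ((a3 + a1) * s) := by rw [add_mul, Real.exp_add]; ring
    have e2 : |g s * gn' s| ≤ (C3 * C1) * Real.exp ((a3 + a1) * s) := by
      rw [abs_mul]
      calc |g s| * |gn' s| ≤ (C3 * Real.exp (a3 * s)) * (C1 * Real.exp (a1 * s)) :=
            mul_le_mul h3 h4 (abs_nonneg _) ((abs_nonneg _).trans h3)
        _ = (C3 * C1) * Real.exp ((a3 + a1) * s) := by rw [add_mul, Real.exp_add]; ring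
    calc |W s| ≤ |g' s * gn s| + |g s * gn' s| := abs_sub _ _
      _ ≤ 2 * (C3 * C1) * Real.exp ((a3 + a1) * s) := by linarith
  -- continuity of W at 0 within Iic 0
  have hWcont : ContinuousWithinAt W (Set.Iic 0) 0 :=
    (((hg'cont.mul hgncont).sub (hgcont.mul hgn'cont)) 0 (Set.self_mem_Iic)).mono le_rfl
  have key := integral_Iic_of_hasDerivAt_of_tendsto hWcont hWderiv hW'int hWtend
  have hW0 : W 0 = -(c * gn' 0) := by simp [hW, hgn0, hgc]
  have hval : ∫ s in Set.Iic (0:ℝ), W' s =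
      -(∫ s in Set.Iic (0:ℝ), f s * gn s) - α := by
    rw [MeasureTheory.integral_congr_ae hae]
    rw [MeasureTheory.integral_neg, MeasureTheory.integral_add hint_fgn (hint_gn2.const_mul α),
      MeasureTheory.integral_const_mul, hnorm]
    ring
  rw [hval, hW0, sub_zero] at key
  linarith
end

section
/- With the notation and hypotheses of the Airy-type compatibility lemma on ℝ₋ (g_n a normalized exponentially decaying solution of −g'' − s g = z g with g_n(0) = 0), the coefficient α is unique: if (g₁, α₁) and (g₂, α₂) both satisfy (−∂_s² − s − z)g_i = f + α_i·g_n on (−∞,0) with g_i(0) = c and exponential decay of g_i and g_i', then α₁ = α₂. -/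
set_option maxHeartbeats 1000000

open Set MeasureTheory Filter

theorem stmt5 (z : ℝ) (gn gn' gn'' f g₁ g₁' g₁'' g₂ g₂' g₂'' : ℝ → ℝ) (c α₁ α₂ : ℝ)
    (hgn1 : ∀ s ∈ Set.Iic (0:ℝ), HasDerivWithinAt gn (gn' s) (Set.Iic 0) s)
    (hgn2 : ∀ s ∈ Set.Iic (0:ℝ), HasDerivWithinAt gn' (gn'' s) (Set.Iic 0) s)
    (hgneq : ∀ s ≤ (0:ℝ), -gn'' s - s * gn s = z * gn s)
    (hgn0 : gn 0 = 0)
    (hnorm : ∫ s in Set.Iic (0:ℝ), (gn s) ^ 2 = 1)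
    (hgndec : ∃ C a : ℝ, 0 < a ∧ ∀ s ≤ (0:ℝ),
      |gn s| ≤ C * Real.exp (a * s) ∧ |gn' s| ≤ C * Real.exp (a * s))
    (hfcont : ContinuousOn f (Set.Iic 0))
    (hfdec : ∃ C a : ℝ, 0 < a ∧ ∀ s ≤ (0:ℝ), |f s| ≤ C * Real.exp (a * s))
    (hg11 : ∀ s ∈ Set.Iic (0:ℝ), HasDerivWithinAt g₁ (g₁' s) (Set.Iic 0) s)
    (hg12 : ∀ s ∈ Set.Iic (0:ℝ), HasDerivWithinAt g₁' (g₁'' s) (Set.Iic 0) s)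
    (hg1eq : ∀ s < (0:ℝ), -g₁'' s - s * g₁ s - z * g₁ s = f s + α₁ * gn s)
    (hg1dec : ∃ C a : ℝ, 0 < a ∧ ∀ s ≤ (0:ℝ),
      |g₁ s| ≤ C * Real.exp (a * s) ∧ |g₁' s| ≤ C * Real.exp (a * s))
    (hg1c : g₁ 0 = c)
    (hg21 : ∀ s ∈ Set.Iic (0:ℝ), HasDerivWithinAt g₂ (g₂' s) (Set.Iic 0) s)
    (hg22 : ∀ s ∈ Set.Iic (0:ℝ), HasDerivWithinAt g₂' (g₂'' s) (Set.Iic 0) s)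
    (hg2eq : ∀ s < (0:ℝ), -g₂'' s - s * g₂ s - z * g₂ s = f s + α₂ * gn s)
    (hg2dec : ∃ C a : ℝ, 0 < a ∧ ∀ s ≤ (0:ℝ),
      |g₂ s| ≤ C * Real.exp (a * s) ∧ |g₂' s| ≤ C * Real.exp (a * s))
    (hg2c : g₂ 0 = c) :
    α₁ = α₂ := by
  set W : ℝ → ℝ := fun s => gn' s * (g₁ s - g₂ s) - gn s * (g₁' s - g₂' s) with hW
  set W' : ℝ → ℝ := fun s => (α₁ - α₂) * gn s ^ 2 with hW'
  -- derivative of W at interior points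
  have hderivW : ∀ x ∈ Iio (0:ℝ), HasDerivAt W (W' x) x := by
    intro x hx
    have hmem : Iic (0:ℝ) ∈ nhds x := Iic_mem_nhds hx
    have h1 := ((hgn1 x (Set.mem_Iic.2 hx.le)).hasDerivAt hmem)
    have h2 := ((hgn2 x (Set.mem_Iic.2 hx.le)).hasDerivAt hmem)
    have h3 := ((hg11 x (Set.mem_Iic.2 hx.le)).hasDerivAt hmem)
    have h4 := ((hg12 x (Set.mem_Iic.2 hx.le)).hasDerivAt hmem)
    have h5 := ((hg21 x (Set.mem_Iic.2 hx.le)).hasDerivAt hmem)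
    have h6 := ((hg22 x (Set.mem_Iic.2 hx.le)).hasDerivAt hmem)
    have hD : HasDerivAt W
        (gn'' x * (g₁ x - g₂ x) + gn' x * (g₁' x - g₂' x)
          - (gn' x * (g₁' x - g₂' x) + gn x * (g₁'' x - g₂'' x))) x :=
      (h2.mul (h3.sub h5)).sub (h1.mul (h4.sub h6))
    have e1 := hgneq x hx.le
    have e2 := hg1eq x hx
    have e3 := hg2eq x hx
    have heq : gn'' x * (g₁ x - g₂ x) + gn' x * (g₁' x - g₂' x)
        - (gn' x * (g₁' x - g₂' x) + gn x * (g₁'' x - g₂'' x)) = W' x := by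
      simp only [hW']
      linear_combination (-(g₁ x - g₂ x)) * e1 + gn x * e2 - gn x * e3
    exact heq ▸ hD
  -- continuity of W at 0 within Iic 0
  have hcontW : ContinuousWithinAt W (Iic 0) 0 := by
    have c1 := (hgn1 0 (Set.mem_Iic.2 le_rfl)).continuousWithinAt
    have c2 := (hgn2 0 (Set.mem_Iic.2 le_rfl)).continuousWithinAt
    have c3 := (hg11 0 (Set.mem_Iic.2 le_rfl)).continuousWithinAt
    have c4 := (hg12 0 (Set.mem_Iic.2 le_rfl)).continuousWithinAt
    have c5 := (hg21 0 (Set.mem_Iic.2 le_rfl)).continuousWithinAt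
    have c6 := (hg22 0 (Set.mem_Iic.2 le_rfl)).continuousWithinAt
    exact (c2.mul (c3.sub c5)).sub (c1.mul (c4.sub c6))
  -- integrability of gn^2
  have hint : IntegrableOn (fun s => gn s ^ 2) (Iic (0:ℝ)) := by
    by_contra h
    rw [MeasureTheory.integral_undef h] at hnorm
    norm_num at hnorm
  have hintW' : IntegrableOn W' (Iic (0:ℝ)) := by
    simpa [hW', mul_comm, IntegrableOn] using hint.const_mul (α₁ - α₂)
  -- W tends to 0 at -∞
  have htend : Tendsto W atBot (nhds 0) := by
    obtain ⟨C, a, ha, hC⟩ := hgndec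
    obtain ⟨C1, a1, ha1, hC1⟩ := hg1dec
    obtain ⟨C2, a2, ha2, hC2⟩ := hg2dec
    set b := min a1 a2 with hb
    have hbpos : 0 < b := lt_min ha1 ha2
    have hbound : ∀ s ≤ (0:ℝ), ‖W s‖ ≤ 2 * C * (C1 + C2) * Real.exp ((a + b) * s) := by
      intro s hs
      have e1 := (hC s hs).1
      have e2 := (hC s hs).2
      have f1 := (hC1 s hs).1
      have f1' := (hC1 s hs).2
      have f2 := (hC2 s hs).1
      have f2' := (hC2 s hs).2
      have hexp1 : Real.exp (a1 * s) ≤ Real.exp (b * s) :=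
        Real.exp_le_exp.2 (by nlinarith [min_le_left a1 a2])
      have hexp2 : Real.exp (a2 * s) ≤ Real.exp (b * s) :=
        Real.exp_le_exp.2 (by nlinarith [min_le_right a1 a2])
      have hg1b : |g₁ s| ≤ C1 * Real.exp (b * s) := by
        calc |g₁ s| ≤ C1 * Real.exp (a1 * s) := f1
          _ ≤ C1 * Real.exp (b * s) := by
            have hC1nn : 0 ≤ C1 := by
              by_contra hneg
              push_neg at hneg
              nlinarith [abs_nonneg (g₁ s), Real.exp_pos (a1 * s), f1]
            exact mul_le_mul_of_nonneg_left hexp1 hC1nn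
      have hg1b' : |g₁' s| ≤ C1 * Real.exp (b * s) := by
        calc |g₁' s| ≤ C1 * Real.exp (a1 * s) := f1'
          _ ≤ C1 * Real.exp (b * s) := by
            have hC1nn : 0 ≤ C1 := by
              by_contra hneg
              push_neg at hneg
              nlinarith [abs_nonneg (g₁ s), Real.exp_pos (a1 * s), f1]
            exact mul_le_mul_of_nonneg_left hexp1 hC1nn
      have hg2b : |g₂ s| ≤ C2 * Real.exp (b * s) := by
        calc |g₂ s| ≤ C2 * Real.exp (a2 * s) := f2
          _ ≤ C2 * Real.exp (b * s) := by
            have hC2nn : 0 ≤ C2 := by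
              by_contra hneg
              push_neg at hneg
              nlinarith [abs_nonneg (g₂ s), Real.exp_pos (a2 * s), f2]
            exact mul_le_mul_of_nonneg_left hexp2 hC2nn
      have hg2b' : |g₂' s| ≤ C2 * Real.exp (b * s) := by
        calc |g₂' s| ≤ C2 * Real.exp (a2 * s) := f2'
          _ ≤ C2 * Real.exp (b * s) := by
            have hC2nn : 0 ≤ C2 := by
              by_contra hneg
              push_neg at hneg
              nlinarith [abs_nonneg (g₂ s), Real.exp_pos (a2 * s), f2]
            exact mul_le_mul_of_nonneg_left hexp2 hC2nn
      have habs : |W s| ≤ |gn' s| * (|g₁ s| + |g₂ s|) + |gn s| * (|g₁' s| + |g₂' s|) := by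
        have h1 : |W s| ≤ |gn' s * (g₁ s - g₂ s)| + |gn s * (g₁' s - g₂' s)| :=
          abs_sub _ _
        rw [abs_mul, abs_mul] at h1
        have h2 : |g₁ s - g₂ s| ≤ |g₁ s| + |g₂ s| := abs_sub _ _
        have h3 : |g₁' s - g₂' s| ≤ |g₁' s| + |g₂' s| := abs_sub _ _
        nlinarith [abs_nonneg (gn s), abs_nonneg (gn' s)]
      have hexpsplit : Real.exp ((a + b) * s) = Real.exp (a * s) * Real.exp (b * s) := by
        rw [← Real.exp_add]; ring_nf
      rw [Real.norm_eq_abs]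
      calc |W s| ≤ |gn' s| * (|g₁ s| + |g₂ s|) + |gn s| * (|g₁' s| + |g₂' s|) := habs
        _ ≤ (C * Real.exp (a * s)) * ((C1 + C2) * Real.exp (b * s))
            + (C * Real.exp (a * s)) * ((C1 + C2) * Real.exp (b * s)) := by
          have hCe : (0:ℝ) ≤ C * Real.exp (a * s) := le_trans (abs_nonneg _) e1
          have t1 : |gn' s| * (|g₁ s| + |g₂ s|)
              ≤ (C * Real.exp (a * s)) * ((C1 + C2) * Real.exp (b * s)) := by
            have := mul_le_mul e2 (add_le_add hg1b hg2b)
              (by positivity) hCe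
            calc |gn' s| * (|g₁ s| + |g₂ s|)
                ≤ (C * Real.exp (a * s)) * (C1 * Real.exp (b * s) + C2 * Real.exp (b * s)) :=
                  this
              _ = (C * Real.exp (a * s)) * ((C1 + C2) * Real.exp (b * s)) := by ring
          have t2 : |gn s| * (|g₁' s| + |g₂' s|)
              ≤ (C * Real.exp (a * s)) * ((C1 + C2) * Real.exp (b * s)) := by
            have := mul_le_mul e1 (add_le_add hg1b' hg2b')
              (by positivity) hCe
            calc |gn s| * (|g₁' s| + |g₂' s|)
                ≤ (C * Real.exp (a * s)) * (C1 * Real.exp (b * s) + C2 * Real.exp (b * s)) :=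
                  this
              _ = (C * Real.exp (a * s)) * ((C1 + C2) * Real.exp (b * s)) := by ring
          linarith
        _ = 2 * C * (C1 + C2) * Real.exp ((a + b) * s) := by
          rw [hexpsplit]; ring
    have hK : Tendsto (fun s => 2 * C * (C1 + C2) * Real.exp ((a + b) * s)) atBot (nhds 0) := by
      have h1 : Tendsto (fun s : ℝ => (a + b) * s) atBot atBot :=
        tendsto_id.const_mul_atBot (by linarith)
      have h2 : Tendsto (fun s : ℝ => Real.exp ((a + b) * s)) atBot (nhds 0) :=
        Real.tendsto_exp_atBot.comp h1
      simpa using h2.const_mul (2 * C * (C1 + C2))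
    exact squeeze_zero_norm' (by filter_upwards [Iic_mem_atBot (0:ℝ)] using hbound) hK
  -- FTC
  have key : ∫ x in Iic (0:ℝ), W' x = W 0 - 0 :=
    integral_Iic_of_hasDerivAt_of_tendsto hcontW hderivW hintW' htend
  have hW0 : W 0 = 0 := by
    simp [hW, hgn0, hg1c, hg2c]
  have hval : ∫ x in Iic (0:ℝ), W' x = (α₁ - α₂) * 1 := by
    rw [← hnorm]
    simp only [hW']
    rw [MeasureTheory.integral_const_mul]
  rw [hval, hW0] at key
  linarith
end

section
/- Let I ⊂ ℝ be an open interval, h > 0, V : I → ℝ continuous, and let (λ, ψ) satisfy −h²ψ'' + Vψ = λψ on I with ψ twice continuously differentiable and compactly supported in I. Then for every continuously differentiable Φ : I → ℝ, ∫_I [ h²·|(e^{Φ}ψ)'|² + V·|e^{Φ}ψ|² − h²·|Φ'·e^{Φ}ψ|² − λ·|e^{Φ}ψ|² ] = 0. -/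
open MeasureTheory Set Filter

theorem stmt17 (I : Set ℝ) (hI : IsOpen I) (hI' : I.OrdConnected)
    (h lam : ℝ) (hh : 0 < h) (V : ℝ → ℝ) (hV : ContinuousOn V I)
    (ψ : ℝ → ℝ) (hψ : ContDiff ℝ 2 ψ) (hsupp : HasCompactSupport ψ)
    (hsub : tsupport ψ ⊆ I)
    (heq : ∀ x ∈ I, -h ^ 2 * deriv (deriv ψ) x + V x * ψ x = lam * ψ x)
    (Φ : ℝ → ℝ) (hΦ : ContDiffOn ℝ 1 Φ I) :
    ∫ x in I, (h ^ 2 * (deriv (fun y => Real.exp (Φ y) * ψ y) x) ^ 2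
      + V x * (Real.exp (Φ x) * ψ x) ^ 2
      - h ^ 2 * (deriv Φ x * Real.exp (Φ x) * ψ x) ^ 2
      - lam * (Real.exp (Φ x) * ψ x) ^ 2) = 0 := by
  set G : ℝ → ℝ := fun x => (Real.exp (Φ x)) ^ 2 * (ψ x * deriv ψ x) with hGdef
  set F : ℝ → ℝ := fun x => (Real.exp (Φ x)) ^ 2 *
      (2 * deriv Φ x * ψ x * deriv ψ x + (deriv ψ x) ^ 2 + ψ x * deriv (deriv ψ) x)
    with hFdef
  -- basic smoothness facts
  have hψdiff : Differentiable ℝ ψ := hψ.differentiable (by norm_num)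
  have hψ1 : ContDiff ℝ 1 (deriv ψ) := by
    have h2 : ContDiff ℝ (1 + 1) ψ := by norm_num; exact hψ
    exact (contDiff_succ_iff_deriv.mp h2).2.2
  have hψ'diff : Differentiable ℝ (deriv ψ) := hψ1.differentiable one_ne_zero
  have hψ''cont : Continuous (deriv (deriv ψ)) := (contDiff_one_iff_deriv.mp hψ1).2
  -- HasDerivAt facts on I
  have hΦd : ∀ x ∈ I, HasDerivAt Φ (deriv Φ x) x := fun x hx =>
    (((hΦ.differentiableOn one_ne_zero).differentiableAt (hI.mem_nhds hx))).hasDerivAt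
  have hGderiv : ∀ x ∈ I, HasDerivAt G (F x) x := by
    intro x hx
    have hexp : HasDerivAt (fun y => Real.exp (Φ y)) (Real.exp (Φ x) * deriv Φ x) x :=
      (hΦd x hx).exp
    have hexp2 : HasDerivAt (fun y => (Real.exp (Φ y)) ^ 2)
        ((2 : ℕ) * (Real.exp (Φ x)) ^ 1 * (Real.exp (Φ x) * deriv Φ x)) x := hexp.pow 2
    have hmul : HasDerivAt (fun y => ψ y * deriv ψ y)
        (deriv ψ x * deriv ψ x + ψ x * deriv (deriv ψ) x) x :=
      (hψdiff x).hasDerivAt.mul (hψ'diff x).hasDerivAt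
    have := hexp2.mul hmul
    convert this using 1
    · rfl
    · rfl
    · rfl
    simp [hFdef]
    ring
  -- vanishing off the support
  have hGzero : ∀ x ∉ tsupport ψ, G =ᶠ[nhds x] 0 := by
    intro x hx
    filter_upwards [(isClosed_tsupport ψ).isOpen_compl.mem_nhds hx] with y hy
    have hy0 : ψ y = 0 := image_eq_zero_of_notMem_tsupport hy
    simp [hGdef, hy0]
  have hderivzero : ∀ x ∉ tsupport ψ, deriv G x = 0 := by
    intro x hx
    exact (hGzero x hx).deriv_eq.trans (deriv_const x 0)
  -- global differentiability and continuity of the derivative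
  have hcover : ∀ x : ℝ, x ∈ I ∨ x ∉ tsupport ψ := by
    intro x
    by_cases hx : x ∈ tsupport ψ
    · exact Or.inl (hsub hx)
    · exact Or.inr hx
  have hGdiff : Differentiable ℝ G := by
    intro x
    rcases hcover x with hx | hx
    · exact (hGderiv x hx).differentiableAt
    · exact (differentiableAt_const (0 : ℝ)).congr_of_eventuallyEq (hGzero x hx)
  have hFcont : ContinuousOn F I := by
    have hdΦ : ContinuousOn (deriv Φ) I := hΦ.continuousOn_deriv_of_isOpen hI le_rfl
    have hΦc : ContinuousOn Φ I := hΦ.continuousOn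
    have h1 : ContinuousOn (fun x => 2 * deriv Φ x * ψ x * deriv ψ x) I :=
      ((continuousOn_const.mul hdΦ).mul hψ.continuous.continuousOn).mul
        hψ1.continuous.continuousOn
    have h2 : ContinuousOn (fun x => (deriv ψ x) ^ 2) I := hψ1.continuous.continuousOn.pow 2
    have h3 : ContinuousOn (fun x => ψ x * deriv (deriv ψ) x) I :=
      hψ.continuous.continuousOn.mul hψ''cont.continuousOn
    exact ((Real.continuous_exp.comp_continuousOn hΦc).pow 2).mul ((h1.add h2).add h3)
  have hderivF : ∀ x ∈ I, deriv G x = F x := fun x hx => (hGderiv x hx).deriv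
  have hGdcont : Continuous (deriv G) := by
    rw [continuous_iff_continuousAt]
    intro x
    rcases hcover x with hx | hx
    · have hF : ContinuousAt F x := (hFcont x hx).continuousAt (hI.mem_nhds hx)
      apply hF.congr
      filter_upwards [hI.mem_nhds hx] with y hy
      exact (hderivF y hy).symm
    · apply continuousAt_const.congr
      filter_upwards [(isClosed_tsupport ψ).isOpen_compl.mem_nhds hx] with y hy
      exact (hderivzero y hy).symm
  -- integrand equals h^2 * deriv G on I
  have hinteq : ∀ x ∈ I, (h ^ 2 * (deriv (fun y => Real.exp (Φ y) * ψ y) x) ^ 2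
      + V x * (Real.exp (Φ x) * ψ x) ^ 2
      - h ^ 2 * (deriv Φ x * Real.exp (Φ x) * ψ x) ^ 2
      - lam * (Real.exp (Φ x) * ψ x) ^ 2) = h ^ 2 * deriv G x := by
    intro x hx
    have hexp : HasDerivAt (fun y => Real.exp (Φ y)) (Real.exp (Φ x) * deriv Φ x) x :=
      (hΦd x hx).exp
    have hd : deriv (fun y => Real.exp (Φ y) * ψ y) x =
        Real.exp (Φ x) * deriv Φ x * ψ x + Real.exp (Φ x) * deriv ψ x :=
      (hexp.mul (hψdiff x).hasDerivAt).deriv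
    rw [hd, hderivF x hx, hFdef]
    linear_combination (Real.exp (Φ x)) ^ 2 * ψ x * (heq x hx)
  -- rewrite the integral
  rw [setIntegral_congr_fun hI.measurableSet hinteq]
  have hcompl : ∀ x ∉ I, h ^ 2 * deriv G x = 0 := by
    intro x hx
    have : x ∉ tsupport ψ := fun hc => hx (hsub hc)
    rw [hderivzero x this, mul_zero]
  rw [setIntegral_eq_integral_of_forall_compl_eq_zero hcompl, integral_const_mul]
  -- choose a big interval containing the support
  obtain ⟨r0, hr0⟩ := hsupp.isCompact.isBounded.subset_closedBall 0
  set r : ℝ := max r0 0 with hrdef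
  have hr : tsupport ψ ⊆ Metric.closedBall 0 r :=
    hr0.trans (Metric.closedBall_subset_closedBall (le_max_left _ _))
  have hrpos : 0 ≤ r := le_max_right _ _
  have hsub2 : tsupport ψ ⊆ Ioo (-(r + 1)) (r + 1) := by
    intro x hx
    have := hr hx
    simp only [Metric.mem_closedBall, Real.dist_eq, sub_zero] at this
    constructor <;> [nlinarith [abs_le.mp this]; nlinarith [abs_le.mp this]]
  have hcompl2 : ∀ x ∉ Ioo (-(r + 1)) (r + 1), deriv G x = 0 := fun x hx =>
    hderivzero x (fun hc => hx (hsub2 hc))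
  rw [← setIntegral_eq_integral_of_forall_compl_eq_zero hcompl2,
    ← integral_Ioc_eq_integral_Ioo]
  have hab : (-(r + 1)) ≤ r + 1 := by linarith
  have key : ∫ x in (-(r + 1))..(r + 1), deriv G x = G (r + 1) - G (-(r + 1)) := by
    apply intervalIntegral.integral_deriv_eq_sub
    · intro x _; exact hGdiff x
    · exact hGdcont.intervalIntegrable _ _
  rw [← intervalIntegral.integral_of_le hab] at *
  have hGa : G (-(r + 1)) = 0 := by
    have : (-(r + 1)) ∉ tsupport ψ := fun hc => by
      have := hsub2 hc; exact absurd this.1 (lt_irrefl _)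
    have h0 : ψ (-(r + 1)) = 0 := image_eq_zero_of_notMem_tsupport this
    show Real.exp (Φ (-(r + 1))) ^ 2 * (ψ (-(r + 1)) * deriv ψ (-(r + 1))) = 0
    rw [h0]; ring
  have hGb : G (r + 1) = 0 := by
    have : (r + 1) ∉ tsupport ψ := fun hc => by
      have := hsub2 hc; exact absurd this.2 (lt_irrefl _)
    have h0 : ψ (r + 1) = 0 := image_eq_zero_of_notMem_tsupport this
    show Real.exp (Φ (r + 1)) ^ 2 * (ψ (r + 1) * deriv ψ (r + 1)) = 0
    rw [h0]; ring
  rw [key, hGa, hGb]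
  ring
end
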